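/- For every integer k one has (5 + √2)/(5 − √2) ≠ ((1 + √2)/(√2 − 1))^k, where the power is the integer power (zpow) in the real numbers. -/
import Mathlib


/-- For every integer `k`, `(5 + √2)/(5 − √2) ≠ ((1 + √2)/(√2 − 1))^k`. -/
theorem ratio_ne_unit_zpow (k : ℤ) :
    (5 + Real.sqrt 2) / (5 - Real.sqrt 2) ≠ ((1 + Real.sqrt 2) / (Real.sqrt 2 - 1)) ^ k := by
  have h2 : (1:ℝ) < Real.sqrt 2 := by
    have := Real.lt_sqrt (x := 1) (y := 2) (by norm_num)
    nlinarith [this.mpr (by norm_num)]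
  have h2' : Real.sqrt 2 < 2 := by
    nlinarith [Real.sq_sqrt (by norm_num : (2:ℝ) ≥ 0), Real.sqrt_nonneg 2]
  set s := Real.sqrt 2 with hs
  have hd1 : (0:ℝ) < 5 - s := by linarith
  have hd2 : (0:ℝ) < s - 1 := by linarith
  set L := (5 + s) / (5 - s) with hL
  set u := (1 + s) / (s - 1) with hu
  have hL1 : 1 < L := by
    rw [hL, lt_div_iff₀ hd1]; linarith
  have hLu : L < u := by
    rw [hL, hu, div_lt_div_iff₀ hd1 hd2]; nlinarith
  have hu1 : 1 < u := lt_trans hL1 hLu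
  intro h
  rcases le_or_gt k 0 with hk | hk
  · have : u ^ k ≤ 1 := zpow_le_one_of_nonpos₀ (le_of_lt hu1) hk
    linarith [h ▸ this]
  · have h1k : (1:ℤ) ≤ k := hk
    have : u ^ (1:ℤ) ≤ u ^ k := zpow_le_zpow_right₀ (le_of_lt hu1) h1k
    rw [zpow_one] at this
    linarith [h ▸ this]
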